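/- arXiv:1001.2278 — 2 statements merged into one kernel-verified Lean document; each statement's English description precedes it below -/
import Mathlib

section
/- Let R be an algebraic curvature tensor on ℝ³ (dimension 3). Then the curvature tensor of the Riemannian product with ℝ (equivalently, condition: R(e₁,e₃,e₁,e₃) + λ²R(e₁,e₄,e₁,e₄) + R(e₂,e₃,e₂,e₃) + λ²R(e₂,e₄,e₂,e₄) − 2λR(e₁,e₂,e₃,e₄) ≥ 0 on the product ℝ³×ℝ for all four-frames) has nonnegative isotropic curvature if and only if the Ricci curvature of R is nonnegative, i.e. Ric(v,v) = Σ_k R(v,e_k,v,e_k) ≥ 0 for all v. -/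
noncomputable section
set_option linter.unusedSectionVars false
set_option maxHeartbeats 1000000
open scoped BigOperators

def dotp {n : ℕ} (X Y : Fin n → ℝ) : ℝ := ∑ i, X i * Y i

def ON4 {n : ℕ} (e₁ e₂ e₃ e₄ : Fin n → ℝ) : Prop :=
  dotp e₁ e₁ = 1 ∧ dotp e₂ e₂ = 1 ∧ dotp e₃ e₃ = 1 ∧ dotp e₄ e₄ = 1 ∧
  dotp e₁ e₂ = 0 ∧ dotp e₁ e₃ = 0 ∧ dotp e₁ e₄ = 0 ∧
  dotp e₂ e₃ = 0 ∧ dotp e₂ e₄ = 0 ∧ dotp e₃ e₄ = 0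

/-- The standard basis of `ℝ³`. -/
def stdBasis3 (k : Fin 3) : Fin 3 → ℝ := fun i => if i = k then 1 else 0

section Aux
open Matrix
variable (R : MultilinearMap ℝ (fun _ : Fin 4 => (Fin 3 → ℝ)) ℝ)

abbrev V3 := Fin 3 → ℝ

lemma upd0 (x a b c d : V3) : Function.update ![a,b,c,d] 0 x = ![x,b,c,d] := by
  funext i; fin_cases i <;> simp [Function.update]
lemma upd1 (x a b c d : V3) : Function.update ![a,b,c,d] 1 x = ![a,x,c,d] := by
  funext i; fin_cases i <;> simp [Function.update]
lemma upd2 (x a b c d : V3) : Function.update ![a,b,c,d] 2 x = ![a,b,x,d] := by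
  funext i; fin_cases i <;> simp [Function.update]
lemma upd3 (x a b c d : V3) : Function.update ![a,b,c,d] 3 x = ![a,b,c,x] := by
  funext i; fin_cases i <;> simp [Function.update]

lemma hrepr (v : V3) : v = ∑ i, v i • stdBasis3 i := by
  funext j; fin_cases j <;> simp [stdBasis3, Fin.sum_univ_three]

lemma Rexp0 (X Y Z W : V3) :
    R ![X, Y, Z, W] = ∑ i, X i * R ![stdBasis3 i, Y, Z, W] := by
  conv_lhs => rw [show X = ∑ i, X i • stdBasis3 i from hrepr X]
  rw [← upd0 (∑ i, X i • stdBasis3 i) X Y Z W, R.map_update_sum]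
  refine Finset.sum_congr rfl fun i _ => ?_
  rw [R.map_update_smul, upd0]; simp

lemma Rexp1 (X Y Z W : V3) :
    R ![X, Y, Z, W] = ∑ i, Y i * R ![X, stdBasis3 i, Z, W] := by
  conv_lhs => rw [show Y = ∑ i, Y i • stdBasis3 i from hrepr Y]
  rw [← upd1 (∑ i, Y i • stdBasis3 i) X Y Z W, R.map_update_sum]
  refine Finset.sum_congr rfl fun i _ => ?_
  rw [R.map_update_smul, upd1]; simp

lemma Rexp2 (X Y Z W : V3) :
    R ![X, Y, Z, W] = ∑ i, Z i * R ![X, Y, stdBasis3 i, W] := by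
  conv_lhs => rw [show Z = ∑ i, Z i • stdBasis3 i from hrepr Z]
  rw [← upd2 (∑ i, Z i • stdBasis3 i) X Y Z W, R.map_update_sum]
  refine Finset.sum_congr rfl fun i _ => ?_
  rw [R.map_update_smul, upd2]; simp

lemma Rexp3 (X Y Z W : V3) :
    R ![X, Y, Z, W] = ∑ i, W i * R ![X, Y, Z, stdBasis3 i] := by
  conv_lhs => rw [show W = ∑ i, W i • stdBasis3 i from hrepr W]
  rw [← upd3 (∑ i, W i • stdBasis3 i) X Y Z W, R.map_update_sum]
  refine Finset.sum_congr rfl fun i _ => ?_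
  rw [R.map_update_smul, upd3]; simp



def ric (v w : V3) : ℝ := ∑ k, R ![v, stdBasis3 k, w, stdBasis3 k]

def Scal : ℝ := ric R (stdBasis3 0) (stdBasis3 0) + ric R (stdBasis3 1) (stdBasis3 1)
  + ric R (stdBasis3 2) (stdBasis3 2)

lemma Rexp (X Y Z W : V3) :
    R ![X, Y, Z, W] = ∑ i, X i * (∑ j, Y j * (∑ k, Z k * (∑ l, W l *
      R ![stdBasis3 i, stdBasis3 j, stdBasis3 k, stdBasis3 l]))) := by
  rw [Rexp0]
  refine Finset.sum_congr rfl fun i _ => congrArg (X i * ·) ?_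
  rw [Rexp1]
  refine Finset.sum_congr rfl fun j _ => congrArg (Y j * ·) ?_
  rw [Rexp2]
  refine Finset.sum_congr rfl fun k _ => congrArg (Z k * ·) ?_
  exact Rexp3 R _ _ _ _

lemma ric_expand (v w : V3) :
    ric R v w = ∑ i, v i * (∑ j, w j * ric R (stdBasis3 i) (stdBasis3 j)) := by
  unfold ric
  have h1 : ∀ k : Fin 3, R ![v, stdBasis3 k, w, stdBasis3 k]
      = ∑ i, v i * (∑ j, w j * R ![stdBasis3 i, stdBasis3 k, stdBasis3 j, stdBasis3 k]) := by
    intro k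
    rw [Rexp0]
    refine Finset.sum_congr rfl fun i _ => congrArg (v i * ·) ?_
    exact Rexp2 R _ _ _ _
  simp only [h1, Fin.sum_univ_three]
  ring

lemma dotp_eq (X Y : Fin 3 → ℝ) :
    dotp X Y = X 0 * Y 0 + X 1 * Y 1 + X 2 * Y 2 := by
  simp [dotp, Fin.sum_univ_three]

lemma ric_basis (i j : Fin 3) : ric R (stdBasis3 i) (stdBasis3 j)
    = R ![stdBasis3 i, stdBasis3 0, stdBasis3 j, stdBasis3 0]
    + R ![stdBasis3 i, stdBasis3 1, stdBasis3 j, stdBasis3 1]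
    + R ![stdBasis3 i, stdBasis3 2, stdBasis3 j, stdBasis3 2] := by
  simp [ric, Fin.sum_univ_three]

variable (hanti : ∀ X Y Z W : V3, R ![X, Y, Z, W] = - R ![Y, X, Z, W])
variable (hpair : ∀ X Y Z W : V3, R ![X, Y, Z, W] = R ![Z, W, X, Y])

include hanti hpair

lemma hanti2 (X Y Z W : V3) : R ![X, Y, Z, W] = - R ![X, Y, W, Z] := by
  linarith [hpair X Y Z W, hanti Z W X Y, hpair W Z X Y]

lemma Rzero12 (X Z W : V3) : R ![X, X, Z, W] = 0 := by linarith [hanti X X Z W]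

lemma Rzero34 (X Y Z : V3) : R ![X, Y, Z, Z] = 0 := by
  linarith [hpair X Y Z Z, hanti Z Z X Y]

lemma ric_symm (v w : V3) : ric R v w = ric R w v := by
  unfold ric; exact Finset.sum_congr rfl fun k _ => hpair v (stdBasis3 k) w (stdBasis3 k)

lemma comp0110 : R ![stdBasis3 0, stdBasis3 1, stdBasis3 1, stdBasis3 0] = -(R ![stdBasis3 0, stdBasis3 1, stdBasis3 0, stdBasis3 1]) := by
  linarith [hanti2 R hanti hpair (stdBasis3 0) (stdBasis3 1) (stdBasis3 1) (stdBasis3 0)]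
lemma comp0120 : R ![stdBasis3 0, stdBasis3 1, stdBasis3 2, stdBasis3 0] = -(R ![stdBasis3 0, stdBasis3 1, stdBasis3 0, stdBasis3 2]) := by
  linarith [hanti2 R hanti hpair (stdBasis3 0) (stdBasis3 1) (stdBasis3 2) (stdBasis3 0)]
lemma comp0121 : R ![stdBasis3 0, stdBasis3 1, stdBasis3 2, stdBasis3 1] = -(R ![stdBasis3 0, stdBasis3 1, stdBasis3 1, stdBasis3 2]) := by
  linarith [hanti2 R hanti hpair (stdBasis3 0) (stdBasis3 1) (stdBasis3 2) (stdBasis3 1)]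
lemma comp0201 : R ![stdBasis3 0, stdBasis3 2, stdBasis3 0, stdBasis3 1] = R ![stdBasis3 0, stdBasis3 1, stdBasis3 0, stdBasis3 2] := by
  linarith [hpair (stdBasis3 0) (stdBasis3 2) (stdBasis3 0) (stdBasis3 1)]
lemma comp0210 : R ![stdBasis3 0, stdBasis3 2, stdBasis3 1, stdBasis3 0] = -(R ![stdBasis3 0, stdBasis3 1, stdBasis3 0, stdBasis3 2]) := by
  linarith [hanti2 R hanti hpair (stdBasis3 0) (stdBasis3 2) (stdBasis3 1) (stdBasis3 0), hpair (stdBasis3 0) (stdBasis3 2) (stdBasis3 0) (stdBasis3 1)]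
lemma comp0220 : R ![stdBasis3 0, stdBasis3 2, stdBasis3 2, stdBasis3 0] = -(R ![stdBasis3 0, stdBasis3 2, stdBasis3 0, stdBasis3 2]) := by
  linarith [hanti2 R hanti hpair (stdBasis3 0) (stdBasis3 2) (stdBasis3 2) (stdBasis3 0)]
lemma comp0221 : R ![stdBasis3 0, stdBasis3 2, stdBasis3 2, stdBasis3 1] = -(R ![stdBasis3 0, stdBasis3 2, stdBasis3 1, stdBasis3 2]) := by
  linarith [hanti2 R hanti hpair (stdBasis3 0) (stdBasis3 2) (stdBasis3 2) (stdBasis3 1)]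
lemma comp1001 : R ![stdBasis3 1, stdBasis3 0, stdBasis3 0, stdBasis3 1] = -(R ![stdBasis3 0, stdBasis3 1, stdBasis3 0, stdBasis3 1]) := by
  linarith [hanti (stdBasis3 1) (stdBasis3 0) (stdBasis3 0) (stdBasis3 1)]
lemma comp1002 : R ![stdBasis3 1, stdBasis3 0, stdBasis3 0, stdBasis3 2] = -(R ![stdBasis3 0, stdBasis3 1, stdBasis3 0, stdBasis3 2]) := by
  linarith [hanti (stdBasis3 1) (stdBasis3 0) (stdBasis3 0) (stdBasis3 2)]
lemma comp1010 : R ![stdBasis3 1, stdBasis3 0, stdBasis3 1, stdBasis3 0] = R ![stdBasis3 0, stdBasis3 1, stdBasis3 0, stdBasis3 1] := by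
  linarith [hanti (stdBasis3 1) (stdBasis3 0) (stdBasis3 1) (stdBasis3 0), hanti2 R hanti hpair (stdBasis3 0) (stdBasis3 1) (stdBasis3 1) (stdBasis3 0)]
lemma comp1012 : R ![stdBasis3 1, stdBasis3 0, stdBasis3 1, stdBasis3 2] = -(R ![stdBasis3 0, stdBasis3 1, stdBasis3 1, stdBasis3 2]) := by
  linarith [hanti (stdBasis3 1) (stdBasis3 0) (stdBasis3 1) (stdBasis3 2)]
lemma comp1020 : R ![stdBasis3 1, stdBasis3 0, stdBasis3 2, stdBasis3 0] = R ![stdBasis3 0, stdBasis3 1, stdBasis3 0, stdBasis3 2] := by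
  linarith [hanti (stdBasis3 1) (stdBasis3 0) (stdBasis3 2) (stdBasis3 0), hanti2 R hanti hpair (stdBasis3 0) (stdBasis3 1) (stdBasis3 2) (stdBasis3 0)]
lemma comp1021 : R ![stdBasis3 1, stdBasis3 0, stdBasis3 2, stdBasis3 1] = R ![stdBasis3 0, stdBasis3 1, stdBasis3 1, stdBasis3 2] := by
  linarith [hanti (stdBasis3 1) (stdBasis3 0) (stdBasis3 2) (stdBasis3 1), hanti2 R hanti hpair (stdBasis3 0) (stdBasis3 1) (stdBasis3 2) (stdBasis3 1)]
lemma comp1201 : R ![stdBasis3 1, stdBasis3 2, stdBasis3 0, stdBasis3 1] = R ![stdBasis3 0, stdBasis3 1, stdBasis3 1, stdBasis3 2] := by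
  linarith [hpair (stdBasis3 1) (stdBasis3 2) (stdBasis3 0) (stdBasis3 1)]
lemma comp1202 : R ![stdBasis3 1, stdBasis3 2, stdBasis3 0, stdBasis3 2] = R ![stdBasis3 0, stdBasis3 2, stdBasis3 1, stdBasis3 2] := by
  linarith [hpair (stdBasis3 1) (stdBasis3 2) (stdBasis3 0) (stdBasis3 2)]
lemma comp1210 : R ![stdBasis3 1, stdBasis3 2, stdBasis3 1, stdBasis3 0] = -(R ![stdBasis3 0, stdBasis3 1, stdBasis3 1, stdBasis3 2]) := by
  linarith [hanti2 R hanti hpair (stdBasis3 1) (stdBasis3 2) (stdBasis3 1) (stdBasis3 0), hpair (stdBasis3 1) (stdBasis3 2) (stdBasis3 0) (stdBasis3 1)]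
lemma comp1220 : R ![stdBasis3 1, stdBasis3 2, stdBasis3 2, stdBasis3 0] = -(R ![stdBasis3 0, stdBasis3 2, stdBasis3 1, stdBasis3 2]) := by
  linarith [hanti2 R hanti hpair (stdBasis3 1) (stdBasis3 2) (stdBasis3 2) (stdBasis3 0), hpair (stdBasis3 1) (stdBasis3 2) (stdBasis3 0) (stdBasis3 2)]
lemma comp1221 : R ![stdBasis3 1, stdBasis3 2, stdBasis3 2, stdBasis3 1] = -(R ![stdBasis3 1, stdBasis3 2, stdBasis3 1, stdBasis3 2]) := by
  linarith [hanti2 R hanti hpair (stdBasis3 1) (stdBasis3 2) (stdBasis3 2) (stdBasis3 1)]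
lemma comp2001 : R ![stdBasis3 2, stdBasis3 0, stdBasis3 0, stdBasis3 1] = -(R ![stdBasis3 0, stdBasis3 1, stdBasis3 0, stdBasis3 2]) := by
  linarith [hanti (stdBasis3 2) (stdBasis3 0) (stdBasis3 0) (stdBasis3 1), hpair (stdBasis3 0) (stdBasis3 2) (stdBasis3 0) (stdBasis3 1)]
lemma comp2002 : R ![stdBasis3 2, stdBasis3 0, stdBasis3 0, stdBasis3 2] = -(R ![stdBasis3 0, stdBasis3 2, stdBasis3 0, stdBasis3 2]) := by
  linarith [hanti (stdBasis3 2) (stdBasis3 0) (stdBasis3 0) (stdBasis3 2)]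
lemma comp2010 : R ![stdBasis3 2, stdBasis3 0, stdBasis3 1, stdBasis3 0] = R ![stdBasis3 0, stdBasis3 1, stdBasis3 0, stdBasis3 2] := by
  linarith [hanti (stdBasis3 2) (stdBasis3 0) (stdBasis3 1) (stdBasis3 0), hanti2 R hanti hpair (stdBasis3 0) (stdBasis3 2) (stdBasis3 1) (stdBasis3 0), hpair (stdBasis3 0) (stdBasis3 2) (stdBasis3 0) (stdBasis3 1)]
lemma comp2012 : R ![stdBasis3 2, stdBasis3 0, stdBasis3 1, stdBasis3 2] = -(R ![stdBasis3 0, stdBasis3 2, stdBasis3 1, stdBasis3 2]) := by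
  linarith [hanti (stdBasis3 2) (stdBasis3 0) (stdBasis3 1) (stdBasis3 2)]
lemma comp2020 : R ![stdBasis3 2, stdBasis3 0, stdBasis3 2, stdBasis3 0] = R ![stdBasis3 0, stdBasis3 2, stdBasis3 0, stdBasis3 2] := by
  linarith [hanti (stdBasis3 2) (stdBasis3 0) (stdBasis3 2) (stdBasis3 0), hanti2 R hanti hpair (stdBasis3 0) (stdBasis3 2) (stdBasis3 2) (stdBasis3 0)]
lemma comp2021 : R ![stdBasis3 2, stdBasis3 0, stdBasis3 2, stdBasis3 1] = R ![stdBasis3 0, stdBasis3 2, stdBasis3 1, stdBasis3 2] := by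
  linarith [hanti (stdBasis3 2) (stdBasis3 0) (stdBasis3 2) (stdBasis3 1), hanti2 R hanti hpair (stdBasis3 0) (stdBasis3 2) (stdBasis3 2) (stdBasis3 1)]
lemma comp2101 : R ![stdBasis3 2, stdBasis3 1, stdBasis3 0, stdBasis3 1] = -(R ![stdBasis3 0, stdBasis3 1, stdBasis3 1, stdBasis3 2]) := by
  linarith [hanti (stdBasis3 2) (stdBasis3 1) (stdBasis3 0) (stdBasis3 1), hpair (stdBasis3 1) (stdBasis3 2) (stdBasis3 0) (stdBasis3 1)]
lemma comp2102 : R ![stdBasis3 2, stdBasis3 1, stdBasis3 0, stdBasis3 2] = -(R ![stdBasis3 0, stdBasis3 2, stdBasis3 1, stdBasis3 2]) := by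
  linarith [hanti (stdBasis3 2) (stdBasis3 1) (stdBasis3 0) (stdBasis3 2), hpair (stdBasis3 1) (stdBasis3 2) (stdBasis3 0) (stdBasis3 2)]
lemma comp2110 : R ![stdBasis3 2, stdBasis3 1, stdBasis3 1, stdBasis3 0] = R ![stdBasis3 0, stdBasis3 1, stdBasis3 1, stdBasis3 2] := by
  linarith [hanti (stdBasis3 2) (stdBasis3 1) (stdBasis3 1) (stdBasis3 0), hanti2 R hanti hpair (stdBasis3 1) (stdBasis3 2) (stdBasis3 1) (stdBasis3 0), hpair (stdBasis3 1) (stdBasis3 2) (stdBasis3 0) (stdBasis3 1)]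
lemma comp2112 : R ![stdBasis3 2, stdBasis3 1, stdBasis3 1, stdBasis3 2] = -(R ![stdBasis3 1, stdBasis3 2, stdBasis3 1, stdBasis3 2]) := by
  linarith [hanti (stdBasis3 2) (stdBasis3 1) (stdBasis3 1) (stdBasis3 2)]
lemma comp2120 : R ![stdBasis3 2, stdBasis3 1, stdBasis3 2, stdBasis3 0] = R ![stdBasis3 0, stdBasis3 2, stdBasis3 1, stdBasis3 2] := by
  linarith [hanti (stdBasis3 2) (stdBasis3 1) (stdBasis3 2) (stdBasis3 0), hanti2 R hanti hpair (stdBasis3 1) (stdBasis3 2) (stdBasis3 2) (stdBasis3 0), hpair (stdBasis3 1) (stdBasis3 2) (stdBasis3 0) (stdBasis3 2)]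
lemma comp2121 : R ![stdBasis3 2, stdBasis3 1, stdBasis3 2, stdBasis3 1] = R ![stdBasis3 1, stdBasis3 2, stdBasis3 1, stdBasis3 2] := by
  linarith [hanti (stdBasis3 2) (stdBasis3 1) (stdBasis3 2) (stdBasis3 1), hanti2 R hanti hpair (stdBasis3 1) (stdBasis3 2) (stdBasis3 2) (stdBasis3 1)]

lemma key (X Y Z W : V3) :
    R ![X, Y, Z, W] = ric R X Z * dotp Y W + ric R Y W * dotp X Z
      - ric R X W * dotp Y Z - ric R Y Z * dotp X W
      - Scal R / 2 * (dotp X Z * dotp Y W - dotp X W * dotp Y Z) := by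
  rw [Rexp, ric_expand R X Z, ric_expand R Y W, ric_expand R X W, ric_expand R Y Z,
    dotp_eq, dotp_eq, dotp_eq, dotp_eq]
  unfold Scal
  simp only [Fin.sum_univ_three, ric_basis R]
  simp only [comp0110 R hanti hpair, comp0120 R hanti hpair, comp0121 R hanti hpair, comp0201 R hanti hpair, comp0210 R hanti hpair, comp0220 R hanti hpair, comp0221 R hanti hpair, comp1001 R hanti hpair, comp1002 R hanti hpair, comp1010 R hanti hpair, comp1012 R hanti hpair, comp1020 R hanti hpair, comp1021 R hanti hpair, comp1201 R hanti hpair, comp1202 R hanti hpair, comp1210 R hanti hpair, comp1220 R hanti hpair, comp1221 R hanti hpair, comp2001 R hanti hpair, comp2002 R hanti hpair, comp2010 R hanti hpair, comp2012 R hanti hpair, comp2020 R hanti hpair, comp2021 R hanti hpair, comp2101 R hanti hpair, comp2102 R hanti hpair, comp2110 R hanti hpair, comp2112 R hanti hpair, comp2120 R hanti hpair, comp2121 R hanti hpair, Rzero12 R hanti hpair, Rzero34 R hanti hpair]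
  ring


omit hanti hpair in
lemma trace4 (u : Fin 4 → V3) (t : Fin 4 → ℝ)
    (hgram : ∀ i j, dotp (u i) (u j) = (if i = j then 1 else 0) - t i * t j) :
    t 0 ^ 2 + t 1 ^ 2 + t 2 ^ 2 + t 3 ^ 2 = 1 ∧
    ric R (u 0) (u 0) + ric R (u 1) (u 1) + ric R (u 2) (u 2) + ric R (u 3) (u 3)
      = Scal R := by
  have hdep : ¬ LinearIndependent ℝ u := by
    intro hLI
    have h4 := hLI.fintype_card_le_finrank
    rw [Module.finrank_fin_fun] at h4
    simp at h4
  obtain ⟨g, hg0, i₀, hgi⟩ := Fintype.not_linearIndependent_iff.mp hdep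
  set μ : ℝ := ∑ i, g i * t i with hμdef
  have hdsum : ∀ j, dotp (u j) (∑ i, g i • u i) = ∑ i, g i * dotp (u j) (u i) := by
    intro j
    unfold dotp
    simp only [Finset.sum_apply, Pi.smul_apply, smul_eq_mul, Finset.mul_sum]
    rw [Finset.sum_comm]
    exact Finset.sum_congr rfl fun i _ => Finset.sum_congr rfl fun a _ => by ring
  have hgj : ∀ j, g j = μ * t j := by
    intro j
    have h0 : ∑ i, g i * ((if j = i then 1 else 0) - t j * t i) = 0 := by
      have hh : dotp (u j) (∑ i, g i • u i) = 0 := by rw [hg0]; simp [dotp]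
      rw [hdsum] at hh
      simp only [hgram] at hh
      exact hh
    have h1 : ∑ i, g i * ((if j = i then 1 else 0) - t j * t i)
        = (∑ i, (if j = i then g i else 0)) - t j * ∑ i, g i * t i := by
      rw [Finset.mul_sum, ← Finset.sum_sub_distrib]
      refine Finset.sum_congr rfl fun i _ => ?_
      by_cases h : j = i
      · subst h; simp; ring
      · simp [h]; ring
    rw [h1, Finset.sum_ite_eq] at h0
    simp only [Finset.mem_univ, if_pos] at h0
    rw [hμdef]
    linear_combination h0
  have hμ0 : μ ≠ 0 := fun h => hgi (by rw [hgj i₀, h, zero_mul])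
  have htt : t 0 ^ 2 + t 1 ^ 2 + t 2 ^ 2 + t 3 ^ 2 = 1 := by
    have h2 : μ * 1 = μ * (t 0 ^ 2 + t 1 ^ 2 + t 2 ^ 2 + t 3 ^ 2) := by
      conv_lhs => rw [mul_one, hμdef, Fin.sum_univ_four]
      rw [hgj 0, hgj 1, hgj 2, hgj 3]; ring
    exact (mul_left_cancel₀ hμ0 h2).symm
  have hut : ∀ a : Fin 3,
      t 0 * u 0 a + t 1 * u 1 a + t 2 * u 2 a + t 3 * u 3 a = 0 := by
    intro a
    have h0 := congrFun hg0 a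
    rw [Finset.sum_apply] at h0
    simp only [Pi.smul_apply, smul_eq_mul, Pi.zero_apply] at h0
    rw [Fin.sum_univ_four, hgj 0, hgj 1, hgj 2, hgj 3] at h0
    have hμmul : μ * (t 0 * u 0 a + t 1 * u 1 a + t 2 * u 2 a + t 3 * u 3 a) = 0 := by
      linear_combination h0
    rcases mul_eq_zero.mp hμmul with h | h
    · exact absurd h hμ0
    · exact h
  refine ⟨htt, ?_⟩
  -- matrix part
  set A : Matrix (Fin 3) (Fin 4) ℝ := Matrix.of (fun a i => u i a) with hA
  have hAtA : Aᵀ * A = 1 - Matrix.vecMulVec t t := by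
    ext i j
    have hg := hgram i j
    rw [dotp_eq] at hg
    simp only [Matrix.mul_apply, Matrix.transpose_apply, hA, Matrix.of_apply,
      Matrix.sub_apply, Matrix.one_apply, Matrix.vecMulVec_apply, Fin.sum_univ_three]
    linear_combination hg
  have hAv : A * Matrix.vecMulVec t t * Aᵀ = 0 := by
    ext a b
    simp only [Matrix.mul_apply, Matrix.vecMulVec_apply, hA, Matrix.of_apply,
      Matrix.transpose_apply, Fin.sum_univ_four, Matrix.zero_apply, Finset.sum_mul]
    linear_combination (t 0 * u 0 b + t 1 * u 1 b + t 2 * u 2 b + t 3 * u 3 b) * hut a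
  have hBB : A * Aᵀ * (A * Aᵀ) = A * Aᵀ := by
    calc A * Aᵀ * (A * Aᵀ) = A * (Aᵀ * A) * Aᵀ := by
          rw [Matrix.mul_assoc, Matrix.mul_assoc, Matrix.mul_assoc]
      _ = A * Aᵀ := by
          rw [hAtA, Matrix.mul_sub, Matrix.mul_one, Matrix.sub_mul, hAv, sub_zero]
  have hBsym : ∀ a b, (A * Aᵀ) a b = (A * Aᵀ) b a := by
    intro a b
    have := congrFun (congrFun (Matrix.transpose_mul A Aᵀ) a) b
    rw [Matrix.transpose_transpose] at this
    simpa [Matrix.transpose_apply] using this.symm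
  have htrB : (A * Aᵀ) 0 0 + (A * Aᵀ) 1 1 + (A * Aᵀ) 2 2 = 3 := by
    have h1 : Matrix.trace (A * Aᵀ) = Matrix.trace (Aᵀ * A) := Matrix.trace_mul_comm A Aᵀ
    rw [hAtA] at h1
    simp only [Matrix.trace, Matrix.diag, Fin.sum_univ_three, Fin.sum_univ_four,
      Matrix.sub_apply, Matrix.one_apply, Matrix.vecMulVec_apply] at h1
    norm_num at h1
    rw [h1]
    linarith [htt]
  set M : Matrix (Fin 3) (Fin 3) ℝ := 1 - A * Aᵀ with hM
  have hMM : M * M = M := by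
    rw [hM]
    simp only [Matrix.sub_mul, Matrix.mul_sub, Matrix.one_mul, Matrix.mul_one, hBB]
    abel
  have hMsym : ∀ a b, M a b = M b a := by
    intro a b
    simp only [hM, Matrix.sub_apply, Matrix.one_apply, hBsym a b]
    by_cases h : a = b
    · subst h; simp
    · rw [if_neg h, if_neg (fun hh => h hh.symm)]
  have hdiagM : ∀ a, M a a = ∑ b, M a b * M a b := by
    intro a
    have h1 := congrFun (congrFun hMM a) a
    rw [Matrix.mul_apply] at h1
    rw [← h1]
    exact (Finset.sum_congr rfl fun b _ => by rw [hMsym a b]).symm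
  have htrM : M 0 0 + M 1 1 + M 2 2 = 0 := by
    simp only [hM, Matrix.sub_apply, Matrix.one_apply]
    norm_num
    linarith [htrB]
  have hM0 : ∀ a b, M a b = 0 := by
    have hsum : ∑ a : Fin 3, ∑ b : Fin 3, M a b ^ 2 = 0 := by
      have h1 : ∀ a : Fin 3, ∑ b : Fin 3, M a b ^ 2 = M a a := by
        intro a; rw [hdiagM a]; exact Finset.sum_congr rfl fun b _ => (pow_two _)
      simp only [h1, Fin.sum_univ_three]
      exact htrM
    intro a b
    have h2 : ∀ a ∈ Finset.univ, (0:ℝ) ≤ ∑ b : Fin 3, M a b ^ 2 :=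
      fun a _ => Finset.sum_nonneg fun b _ => sq_nonneg _
    have h3 := (Finset.sum_eq_zero_iff_of_nonneg h2).mp hsum a (Finset.mem_univ a)
    have h4 := (Finset.sum_eq_zero_iff_of_nonneg
      (fun b _ => sq_nonneg (M a b))).mp h3 b (Finset.mem_univ b)
    exact pow_eq_zero_iff (by norm_num) |>.mp h4
  have hE : ∀ a b : Fin 3, u 0 a * u 0 b + u 1 a * u 1 b + u 2 a * u 2 b + u 3 a * u 3 b
      = if a = b then 1 else 0 := by
    intro a b
    have h5 := hM0 a b
    simp only [hM, Matrix.sub_apply, Matrix.one_apply, Matrix.mul_apply, hA, Matrix.of_apply,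
      Matrix.transpose_apply, Fin.sum_univ_four] at h5
    linarith [h5]
  have e00 := hE 0 0; have e01 := hE 0 1; have e02 := hE 0 2
  have e10 := hE 1 0; have e11 := hE 1 1; have e12 := hE 1 2
  have e20 := hE 2 0; have e21 := hE 2 1; have e22 := hE 2 2
  simp only [show ((0:Fin 3) = 0) = True from by simp, show ((1:Fin 3) = 1) = True from by simp,
    show ((2:Fin 3) = 2) = True from by simp, show ((0:Fin 3) = 1) = False from by simp,
    show ((0:Fin 3) = 2) = False from by simp, show ((1:Fin 3) = 0) = False from by simp,
    show ((1:Fin 3) = 2) = False from by simp, show ((2:Fin 3) = 0) = False from by simp,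
    show ((2:Fin 3) = 1) = False from by simp, if_true, if_false]
    at e00 e01 e02 e10 e11 e12 e20 e21 e22
  rw [ric_expand R (u 0) (u 0), ric_expand R (u 1) (u 1), ric_expand R (u 2) (u 2),
    ric_expand R (u 3) (u 3)]
  unfold Scal
  simp only [Fin.sum_univ_three]
  linear_combination ric R (stdBasis3 0) (stdBasis3 0) * e00
    + ric R (stdBasis3 0) (stdBasis3 1) * e01 + ric R (stdBasis3 0) (stdBasis3 2) * e02
    + ric R (stdBasis3 1) (stdBasis3 0) * e10 + ric R (stdBasis3 1) (stdBasis3 1) * e11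
    + ric R (stdBasis3 1) (stdBasis3 2) * e12 + ric R (stdBasis3 2) (stdBasis3 0) * e20
    + ric R (stdBasis3 2) (stdBasis3 1) * e21 + ric R (stdBasis3 2) (stdBasis3 2) * e22

omit hanti hpair in
lemma dotp_comm {n : ℕ} (x y : Fin n → ℝ) : dotp x y = dotp y x :=
  Finset.sum_congr rfl fun i _ => mul_comm _ _

omit hanti hpair in
lemma dotp_zero_right {n : ℕ} (x : Fin n → ℝ) : dotp x 0 = 0 := by simp [dotp]

omit hanti hpair in
lemma dotp_zero_left {n : ℕ} (x : Fin n → ℝ) : dotp 0 x = 0 := by simp [dotp]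

omit hanti hpair in
lemma dotp_smul_left {n : ℕ} (c : ℝ) (x y : Fin n → ℝ) :
    dotp (c • x) y = c * dotp x y := by
  unfold dotp; rw [Finset.mul_sum]
  exact Finset.sum_congr rfl fun i _ => by simp [mul_assoc]

omit hanti hpair in
lemma dotp_smul_right {n : ℕ} (c : ℝ) (x y : Fin n → ℝ) :
    dotp x (c • y) = c * dotp x y := by
  rw [dotp_comm, dotp_smul_left, dotp_comm]

omit hanti hpair in
lemma dotp_split (e f : Fin 4 → ℝ) :
    dotp (e ∘ Fin.castSucc) (f ∘ Fin.castSucc) = dotp e f - e 3 * f 3 := by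
  have h0 : ∀ (e : Fin 4 → ℝ) (i : Fin 3), (e ∘ Fin.castSucc) i = e i.castSucc :=
    fun _ _ => rfl
  simp only [dotp, Fin.sum_univ_four, Fin.sum_univ_three, h0]
  have c0 : (Fin.castSucc (0 : Fin 3)) = (0 : Fin 4) := rfl
  have c1 : (Fin.castSucc (1 : Fin 3)) = (1 : Fin 4) := rfl
  have c2 : (Fin.castSucc (2 : Fin 3)) = (2 : Fin 4) := rfl
  rw [c0, c1, c2]
  ring

omit hanti hpair in
lemma dotp_snoc (a b : V3) (x y : ℝ) :
    dotp (Fin.snoc a x) (Fin.snoc b y) = dotp a b + x * y := by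
  have h := dotp_split (Fin.snoc a x) (Fin.snoc b y)
  have h1 : (Fin.snoc a x : Fin 4 → ℝ) ∘ Fin.castSucc = a := by
    funext i; simp [Fin.snoc_castSucc]
  have h2 : (Fin.snoc b y : Fin 4 → ℝ) ∘ Fin.castSucc = b := by
    funext i; simp [Fin.snoc_castSucc]
  have h3 : (Fin.snoc a x : Fin 4 → ℝ) 3 = x := by
    rw [show (3 : Fin 4) = Fin.last 3 from rfl]
    exact Fin.snoc_last ..
  have h4 : (Fin.snoc b y : Fin 4 → ℝ) 3 = y := by
    rw [show (3 : Fin 4) = Fin.last 3 from rfl]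
    exact Fin.snoc_last ..
  rw [h1, h2, h3, h4] at h
  linarith [h]

omit hanti hpair in
lemma pr_snoc (a : V3) (x : ℝ) : (Fin.snoc a x : Fin 4 → ℝ) ∘ Fin.castSucc = a := by
  funext i; simp [Fin.snoc_castSucc]

omit hanti hpair in
lemma ric_addl (x y w : V3) : ric R (x + y) w = ric R x w + ric R y w := by
  unfold ric
  rw [← Finset.sum_add_distrib]
  refine Finset.sum_congr rfl fun k _ => ?_
  simpa only [upd0] using R.map_update_add ![x, stdBasis3 k, w, stdBasis3 k] 0 x y

omit hanti hpair in
lemma ric_addr (x w z : V3) : ric R x (w + z) = ric R x w + ric R x z := by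
  unfold ric
  rw [← Finset.sum_add_distrib]
  refine Finset.sum_congr rfl fun k _ => ?_
  simpa only [upd2] using R.map_update_add ![x, stdBasis3 k, w, stdBasis3 k] 2 w z

omit hanti hpair in
lemma ric_smull (c : ℝ) (x w : V3) : ric R (c • x) w = c * ric R x w := by
  unfold ric
  rw [Finset.mul_sum]
  refine Finset.sum_congr rfl fun k _ => ?_
  simpa only [upd0, smul_eq_mul] using
    R.map_update_smul ![x, stdBasis3 k, w, stdBasis3 k] 0 c x

omit hanti hpair in
lemma ric_smulr (c : ℝ) (x w : V3) : ric R x (c • w) = c * ric R x w := by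
  unfold ric
  rw [Finset.mul_sum]
  refine Finset.sum_congr rfl fun k _ => ?_
  simpa only [upd2, smul_eq_mul] using
    R.map_update_smul ![x, stdBasis3 k, w, stdBasis3 k] 2 c w

omit hanti hpair in
lemma ric_zero : ric R 0 0 = 0 := by
  unfold ric
  refine Finset.sum_eq_zero fun k _ => R.map_coord_zero 0 (by simp)

omit hanti hpair in
lemma Rzero_slot1 (a c d : V3) : R ![a, 0, c, d] = 0 := R.map_coord_zero 1 (by simp)

omit hanti hpair in
lemma Rzero_slot3 (a b c : V3) : R ![a, b, c, 0] = 0 := R.map_coord_zero 3 (by simp)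

omit hanti hpair in
lemma ric_quad (a b c : ℝ) (P Q Z : V3) :
    ric R (a • P + b • Q + c • Z) (a • P + b • Q + c • Z)
      = a^2 * ric R P P + b^2 * ric R Q Q + c^2 * ric R Z Z
        + a*b*(ric R P Q + ric R Q P) + a*c*(ric R P Z + ric R Z P)
        + b*c*(ric R Q Z + ric R Z Q) := by
  simp only [ric_addl, ric_addr, ric_smull, ric_smulr]
  ring

lemma core (hRic : ∀ v : V3, 0 ≤ ric R v v) (u : Fin 4 → V3) (t : Fin 4 → ℝ)
    (hgram : ∀ i j, dotp (u i) (u j) = (if i = j then 1 else 0) - t i * t j) :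
    0 ≤ R ![u 0, u 2, u 0, u 2] + R ![u 0, u 3, u 0, u 3] + R ![u 1, u 2, u 1, u 2]
      + R ![u 1, u 3, u 1, u 3] - 2 * R ![u 0, u 1, u 2, u 3] := by
  obtain ⟨htt, htr⟩ := trace4 R u t hgram
  have hg00 : dotp (u 0) (u 0) = 1 - t 0 * t 0 := by simpa using hgram 0 0
  have hg11 : dotp (u 1) (u 1) = 1 - t 1 * t 1 := by simpa using hgram 1 1
  have hg22 : dotp (u 2) (u 2) = 1 - t 2 * t 2 := by simpa using hgram 2 2
  have hg33 : dotp (u 3) (u 3) = 1 - t 3 * t 3 := by simpa using hgram 3 3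
  have hg02 : dotp (u 0) (u 2) = - (t 0 * t 2) := by simpa using hgram 0 2
  have hg20 : dotp (u 2) (u 0) = - (t 2 * t 0) := by simpa using hgram 2 0
  have hg03 : dotp (u 0) (u 3) = - (t 0 * t 3) := by simpa using hgram 0 3
  have hg30 : dotp (u 3) (u 0) = - (t 3 * t 0) := by simpa using hgram 3 0
  have hg12 : dotp (u 1) (u 2) = - (t 1 * t 2) := by simpa using hgram 1 2
  have hg21 : dotp (u 2) (u 1) = - (t 2 * t 1) := by simpa using hgram 2 1
  have hg13 : dotp (u 1) (u 3) = - (t 1 * t 3) := by simpa using hgram 1 3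
  have hg31 : dotp (u 3) (u 1) = - (t 3 * t 1) := by simpa using hgram 3 1
  have rs20 : ric R (u 2) (u 0) = ric R (u 0) (u 2) := ric_symm R hanti hpair _ _
  have rs30 : ric R (u 3) (u 0) = ric R (u 0) (u 3) := ric_symm R hanti hpair _ _
  have rs21 : ric R (u 2) (u 1) = ric R (u 1) (u 2) := ric_symm R hanti hpair _ _
  have rs31 : ric R (u 3) (u 1) = ric R (u 1) (u 3) := ric_symm R hanti hpair _ _
  have rs32 : ric R (u 3) (u 2) = ric R (u 2) (u 3) := ric_symm R hanti hpair _ _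
  have rs10 : ric R (u 1) (u 0) = ric R (u 0) (u 1) := ric_symm R hanti hpair _ _
  have k02 := key R hanti hpair (u 0) (u 2) (u 0) (u 2)
  rw [hg22, hg00, hg02, hg20, rs20] at k02
  have k03 := key R hanti hpair (u 0) (u 3) (u 0) (u 3)
  rw [hg33, hg00, hg03, hg30, rs30] at k03
  have k12 := key R hanti hpair (u 1) (u 2) (u 1) (u 2)
  rw [hg22, hg11, hg12, hg21, rs21] at k12
  have k13 := key R hanti hpair (u 1) (u 3) (u 1) (u 3)
  rw [hg33, hg11, hg13, hg31, rs31] at k13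
  have kc := key R hanti hpair (u 0) (u 1) (u 2) (u 3)
  rw [hg13, hg02, hg12, hg03] at kc
  by_cases hp : 0 < t 0 ^ 2 + t 1 ^ 2
  · have h1 := hRic ((t 0^2 + t 1^2) • u 0 + (t 0*t 2 + t 1*t 3) • u 2 + (t 0*t 3 - t 1*t 2) • u 3)
    have h2 := hRic ((t 0^2 + t 1^2) • u 1 + (-(t 0*t 3 - t 1*t 2)) • u 2 + (t 0*t 2 + t 1*t 3) • u 3)
    have hxx := ric_quad R (t 0^2 + t 1^2) (t 0*t 2 + t 1*t 3) (t 0*t 3 - t 1*t 2) (u 0) (u 2) (u 3)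
    have hyy := ric_quad R (t 0^2 + t 1^2) (-(t 0*t 3 - t 1*t 2)) (t 0*t 2 + t 1*t 3) (u 1) (u 2) (u 3)
    rw [rs20, rs30, rs32] at hxx
    rw [rs21, rs31, rs32] at hyy
    have hPB : (t 0^2 + t 1^2) * (R ![u 0, u 2, u 0, u 2] + R ![u 0, u 3, u 0, u 3]
        + R ![u 1, u 2, u 1, u 2] + R ![u 1, u 3, u 1, u 3] - 2 * R ![u 0, u 1, u 2, u 3])
        = ric R ((t 0^2 + t 1^2) • u 0 + (t 0*t 2 + t 1*t 3) • u 2 + (t 0*t 3 - t 1*t 2) • u 3)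
            ((t 0^2 + t 1^2) • u 0 + (t 0*t 2 + t 1*t 3) • u 2 + (t 0*t 3 - t 1*t 2) • u 3)
          + ric R ((t 0^2 + t 1^2) • u 1 + (-(t 0*t 3 - t 1*t 2)) • u 2 + (t 0*t 2 + t 1*t 3) • u 3)
            ((t 0^2 + t 1^2) • u 1 + (-(t 0*t 3 - t 1*t 2)) • u 2 + (t 0*t 2 + t 1*t 3) • u 3) := by
      rw [k02, k03, k12, k13, kc, hxx, hyy]
      linear_combination ((t 0^2 + t 1^2) * (2 - (t 0^2 + t 1^2 + t 2^2 + t 3^2))) * htr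
    have h3 : 0 ≤ (t 0^2 + t 1^2) * (R ![u 0, u 2, u 0, u 2] + R ![u 0, u 3, u 0, u 3]
        + R ![u 1, u 2, u 1, u 2] + R ![u 1, u 3, u 1, u 3] - 2 * R ![u 0, u 1, u 2, u 3]) := by
      rw [hPB]; exact add_nonneg h1 h2
    have h4 := div_nonneg h3 (le_of_lt hp)
    rwa [mul_div_cancel_left₀ _ (ne_of_gt hp)] at h4
  · have hq : 0 < t 2 ^ 2 + t 3 ^ 2 := by
      push_neg at hp
      nlinarith [sq_nonneg (t 0), sq_nonneg (t 1), htt]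
    have h1 := hRic ((t 2^2 + t 3^2) • u 2 + (t 0*t 2 + t 1*t 3) • u 0 + (-(t 0*t 3 - t 1*t 2)) • u 1)
    have h2 := hRic ((t 2^2 + t 3^2) • u 3 + (t 0*t 3 - t 1*t 2) • u 0 + (t 0*t 2 + t 1*t 3) • u 1)
    have hxx := ric_quad R (t 2^2 + t 3^2) (t 0*t 2 + t 1*t 3) (-(t 0*t 3 - t 1*t 2)) (u 2) (u 0) (u 1)
    have hyy := ric_quad R (t 2^2 + t 3^2) (t 0*t 3 - t 1*t 2) (t 0*t 2 + t 1*t 3) (u 3) (u 0) (u 1)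
    rw [rs20, rs21, rs10] at hxx
    rw [rs30, rs31, rs10] at hyy
    have hPB : (t 2^2 + t 3^2) * (R ![u 0, u 2, u 0, u 2] + R ![u 0, u 3, u 0, u 3]
        + R ![u 1, u 2, u 1, u 2] + R ![u 1, u 3, u 1, u 3] - 2 * R ![u 0, u 1, u 2, u 3])
        = ric R ((t 2^2 + t 3^2) • u 2 + (t 0*t 2 + t 1*t 3) • u 0 + (-(t 0*t 3 - t 1*t 2)) • u 1)
            ((t 2^2 + t 3^2) • u 2 + (t 0*t 2 + t 1*t 3) • u 0 + (-(t 0*t 3 - t 1*t 2)) • u 1)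
          + ric R ((t 2^2 + t 3^2) • u 3 + (t 0*t 3 - t 1*t 2) • u 0 + (t 0*t 2 + t 1*t 3) • u 1)
            ((t 2^2 + t 3^2) • u 3 + (t 0*t 3 - t 1*t 2) • u 0 + (t 0*t 2 + t 1*t 3) • u 1) := by
      rw [k02, k03, k12, k13, kc, hxx, hyy]
      linear_combination ((t 2^2 + t 3^2) * (2 - (t 0^2 + t 1^2 + t 2^2 + t 3^2))) * htr
    have h3 : 0 ≤ (t 2^2 + t 3^2) * (R ![u 0, u 2, u 0, u 2] + R ![u 0, u 3, u 0, u 3]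
        + R ![u 1, u 2, u 1, u 2] + R ![u 1, u 3, u 1, u 3] - 2 * R ![u 0, u 1, u 2, u 3]) := by
      rw [hPB]; exact add_nonneg h1 h2
    have h4 := div_nonneg h3 (le_of_lt hq)
    rwa [mul_div_cancel_left₀ _ (ne_of_gt hq)] at h4

lemma unit_ric (w1 w2 w : V3) (h11 : dotp w1 w1 = 1) (h22 : dotp w2 w2 = 1)
    (hww : dotp w w = 1) (h12 : dotp w1 w2 = 0) (h1w : dotp w1 w = 0)
    (h2w : dotp w2 w = 0)
    (hpos : 0 ≤ R ![w1, w, w1, w] + R ![w2, w, w2, w]) : 0 ≤ ric R w w := by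
  have hw1 : dotp w w1 = 0 := (dotp_comm w w1).trans h1w
  have hw2 : dotp w w2 = 0 := (dotp_comm w w2).trans h2w
  have h21 : dotp w2 w1 = 0 := (dotp_comm w2 w1).trans h12
  obtain ⟨-, htr⟩ := trace4 R ![w1, w2, w, 0] ![0, 0, 0, 1] (by
    intro i j
    fin_cases i <;> fin_cases j <;>
      simp [h11, h22, hww, h12, h1w, h2w, hw1, hw2, h21, dotp_zero_right, dotp_zero_left])
  simp only [Matrix.cons_val_zero, Matrix.cons_val_one, Matrix.head_cons,
    Matrix.cons_val_two, Matrix.tail_cons, Matrix.cons_val_three] at htr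
  rw [ric_zero R] at htr
  have k1 := key R hanti hpair w1 w w1 w
  rw [hww, h11, h1w, hw1] at k1
  have k2 := key R hanti hpair w2 w w2 w
  rw [hww, h22, h2w, hw2] at k2
  linarith [k1, k2, htr, hpos]

omit hanti hpair in
lemma completion (w : V3) (hw : dotp w w = 1) :
    ∃ w1 w2 : V3, dotp w1 w1 = 1 ∧ dotp w2 w2 = 1 ∧ dotp w1 w2 = 0 ∧
      dotp w1 w = 0 ∧ dotp w2 w = 0 := by
  rw [dotp_eq] at hw
  by_cases h01 : w 0 ^ 2 + w 1 ^ 2 = 0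
  · have h0 : w 0 = 0 := by
      have := sq_nonneg (w 0); have := sq_nonneg (w 1)
      have h2 : w 0 ^ 2 = 0 := by linarith
      exact (pow_eq_zero_iff two_ne_zero).mp h2
    have h1 : w 1 = 0 := by
      have := sq_nonneg (w 0); have := sq_nonneg (w 1)
      have h2 : w 1 ^ 2 = 0 := by linarith
      exact (pow_eq_zero_iff two_ne_zero).mp h2
    refine ⟨stdBasis3 0, stdBasis3 1, ?_, ?_, ?_, ?_, ?_⟩ <;>
      simp [dotp_eq, stdBasis3, h0, h1]
  · have hApos : 0 < w 0 ^ 2 + w 1 ^ 2 := lt_of_le_of_ne (by positivity) (Ne.symm h01)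
    set s := Real.sqrt (w 0 ^ 2 + w 1 ^ 2) with hsdef
    have hspos : 0 < s := Real.sqrt_pos.mpr hApos
    have hs0 : s ≠ 0 := ne_of_gt hspos
    have hs2 : s ^ 2 = w 0 ^ 2 + w 1 ^ 2 := Real.sq_sqrt (le_of_lt hApos)
    refine ⟨s⁻¹ • ![-(w 1), w 0, 0], s⁻¹ • ![-(w 0*w 2), -(w 1*w 2), s*s],
      ?_, ?_, ?_, ?_, ?_⟩
    · rw [dotp_smul_left, dotp_smul_right, dotp_eq]
      simp only [Matrix.cons_val_zero, Matrix.cons_val_one, Matrix.head_cons,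
        Matrix.cons_val_two, Matrix.tail_cons]
      have hbb : -(w 1) * -(w 1) + w 0 * w 0 + 0 * 0 = s ^ 2 := by linear_combination -hs2
      rw [hbb]; field_simp; try ring
    · rw [dotp_smul_left, dotp_smul_right, dotp_eq]
      simp only [Matrix.cons_val_zero, Matrix.cons_val_one, Matrix.head_cons,
        Matrix.cons_val_two, Matrix.tail_cons]
      have hbb : -(w 0*w 2) * -(w 0*w 2) + -(w 1*w 2) * -(w 1*w 2) + (s*s) * (s*s)
          = s ^ 2 := by
        linear_combination (s^2 + (w 0^2 + w 1^2) - 1) * hs2 + (w 0^2 + w 1^2) * hw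
      rw [hbb]; field_simp; try ring
    · rw [dotp_smul_left, dotp_smul_right, dotp_eq]
      simp only [Matrix.cons_val_zero, Matrix.cons_val_one, Matrix.head_cons,
        Matrix.cons_val_two, Matrix.tail_cons]
      have hbb : -(w 1) * -(w 0*w 2) + w 0 * -(w 1*w 2) + 0 * (s*s) = 0 := by ring
      rw [hbb]; simp
    · rw [dotp_smul_left, dotp_eq]
      simp only [Matrix.cons_val_zero, Matrix.cons_val_one, Matrix.head_cons,
        Matrix.cons_val_two, Matrix.tail_cons]
      have hbb : -(w 1) * w 0 + w 0 * w 1 + 0 * w 2 = 0 := by ring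
      rw [hbb]; simp
    · rw [dotp_smul_left, dotp_eq]
      simp only [Matrix.cons_val_zero, Matrix.cons_val_one, Matrix.head_cons,
        Matrix.cons_val_two, Matrix.tail_cons]
      have hbb : -(w 0*w 2) * w 0 + -(w 1*w 2) * w 1 + (s*s) * w 2 = 0 := by
        linear_combination (w 2) * hs2
      rw [hbb]; simp




omit hanti hpair in
lemma proj4 (R4 : MultilinearMap ℝ (fun _ : Fin 4 => (Fin 4 → ℝ)) ℝ)
    (hR4 : R4 = R.compLinearMap
      (fun _ => LinearMap.funLeft ℝ ℝ (Fin.castSucc : Fin 3 → Fin 4)))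
    (a b c d : Fin 4 → ℝ) :
    R4 ![a, b, c, d] = R ![a ∘ Fin.castSucc, b ∘ Fin.castSucc, c ∘ Fin.castSucc,
      d ∘ Fin.castSucc] := by
  subst hR4
  rw [MultilinearMap.compLinearMap_apply]
  congr 1
  funext i
  fin_cases i <;> rfl

end Aux

theorem product_with_line_nic_iff_ricci_nonneg
    (R : MultilinearMap ℝ (fun _ : Fin 4 => (Fin 3 → ℝ)) ℝ)
    (hanti : ∀ X Y Z W, R ![X, Y, Z, W] = - R ![Y, X, Z, W])
    (hpair : ∀ X Y Z W, R ![X, Y, Z, W] = R ![Z, W, X, Y])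
    (hbianchi : ∀ X Y Z W,
      R ![X, Y, Z, W] + R ![Y, Z, X, W] + R ![Z, X, Y, W] = 0)
    -- the product curvature tensor on ℝ⁴ = ℝ³ × ℝ, extending R by zero
    (R4 : MultilinearMap ℝ (fun _ : Fin 4 => (Fin 4 → ℝ)) ℝ)
    (hR4 : R4 = R.compLinearMap
      (fun _ => LinearMap.funLeft ℝ ℝ (Fin.castSucc : Fin 3 → Fin 4))) :
    (∀ e₁ e₂ e₃ e₄ : Fin 4 → ℝ, ON4 e₁ e₂ e₃ e₄ →
      0 ≤ R4 ![e₁, e₃, e₁, e₃] + R4 ![e₁, e₄, e₁, e₄] + R4 ![e₂, e₃, e₂, e₃]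
          + R4 ![e₂, e₄, e₂, e₄] - 2 * R4 ![e₁, e₂, e₃, e₄]) ↔
    (∀ v : Fin 3 → ℝ, 0 ≤ ∑ k, R ![v, stdBasis3 k, v, stdBasis3 k]) := by
  constructor
  · intro hNIC v
    show 0 ≤ ric R v v
    by_cases hv : dotp v v = 0
    · have hv0 : v = 0 := by
        have hv' : ∑ i, v i * v i = 0 := hv
        have h4 := (Finset.sum_eq_zero_iff_of_nonneg
          (fun i _ => mul_self_nonneg (v i))).mp hv'
        funext a
        exact mul_self_eq_zero.mp (h4 a (Finset.mem_univ a))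
      rw [hv0, ric_zero R]
    · have hd : 0 ≤ dotp v v := Finset.sum_nonneg fun i _ => mul_self_nonneg _
      have hdp : 0 < dotp v v := lt_of_le_of_ne hd (Ne.symm hv)
      set c : ℝ := (Real.sqrt (dotp v v))⁻¹ with hc
      have hsq : Real.sqrt (dotp v v) ^ 2 = dotp v v := Real.sq_sqrt hd
      have hsqpos : 0 < Real.sqrt (dotp v v) := Real.sqrt_pos.mpr hdp
      have hcpos : 0 < c := by rw [hc]; exact inv_pos.mpr hsqpos
      have hwunit : dotp (c • v) (c • v) = 1 := by
        rw [dotp_smul_left, dotp_smul_right, hc]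
        field_simp
        linear_combination -hsq
      obtain ⟨w1, w2, h11, h22, h12, h1w, h2w⟩ := completion (c • v) hwunit
      have hON : ON4 (Fin.snoc w1 0) (Fin.snoc w2 0) (Fin.snoc (c • v) 0)
          (Fin.snoc (0:Fin 3 → ℝ) 1) := by
        refine ⟨?_,?_,?_,?_,?_,?_,?_,?_,?_,?_⟩ <;> rw [dotp_snoc] <;>
          simp [h11, h22, hwunit, h12, h1w, h2w, dotp_zero_right, dotp_zero_left,
            (dotp_comm (c • v) w1).trans h1w, (dotp_comm (c • v) w2).trans h2w]
      have hP := hNIC _ _ _ _ hON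
      simp only [proj4 R R4 hR4, pr_snoc] at hP
      simp only [Rzero_slot1 R, Rzero_slot3 R] at hP
      have hpos : 0 ≤ R ![w1, c • v, w1, c • v] + R ![w2, c • v, w2, c • v] := by
        linarith [hP]
      have hu := unit_ric R hanti hpair w1 w2 (c • v) h11 h22 hwunit h12 h1w h2w hpos
      have hs : ric R (c • v) (c • v) = c * (c * ric R v v) := by
        rw [ric_smull, ric_smulr]
      nlinarith [hu, hs, mul_pos hcpos hcpos]
  · intro hRic e₁ e₂ e₃ e₄ hON
    obtain ⟨h11,h22,h33,h44,h12,h13,h14,h23,h24,h34⟩ := hON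
    have h21 : dotp e₂ e₁ = 0 := (dotp_comm _ _).trans h12
    have h31 : dotp e₃ e₁ = 0 := (dotp_comm _ _).trans h13
    have h41 : dotp e₄ e₁ = 0 := (dotp_comm _ _).trans h14
    have h32 : dotp e₃ e₂ = 0 := (dotp_comm _ _).trans h23
    have h42 : dotp e₄ e₂ = 0 := (dotp_comm _ _).trans h24
    have h43 : dotp e₄ e₃ = 0 := (dotp_comm _ _).trans h34
    have hgram : ∀ i j : Fin 4,
        dotp ((![e₁ ∘ Fin.castSucc, e₂ ∘ Fin.castSucc, e₃ ∘ Fin.castSucc,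
            e₄ ∘ Fin.castSucc] : Fin 4 → (Fin 3 → ℝ)) i)
          (![e₁ ∘ Fin.castSucc, e₂ ∘ Fin.castSucc, e₃ ∘ Fin.castSucc,
            e₄ ∘ Fin.castSucc] j)
        = (if i = j then 1 else 0)
          - (![e₁ 3, e₂ 3, e₃ 3, e₄ 3] : Fin 4 → ℝ) i * ![e₁ 3, e₂ 3, e₃ 3, e₄ 3] j := by
      intro i j
      fin_cases i <;> fin_cases j <;>
        simp [dotp_split, h11, h22, h33, h44, h12, h13, h14, h23, h24, h34,
          h21, h31, h41, h32, h42, h43]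
    have hcore := core R hanti hpair hRic
      ![e₁ ∘ Fin.castSucc, e₂ ∘ Fin.castSucc, e₃ ∘ Fin.castSucc, e₄ ∘ Fin.castSucc]
      ![e₁ 3, e₂ 3, e₃ 3, e₄ 3] hgram
    simp only [Matrix.cons_val_zero, Matrix.cons_val_one, Matrix.head_cons,
      Matrix.cons_val_two, Matrix.tail_cons, Matrix.cons_val_three] at hcore
    simpa only [proj4 R R4 hR4] using hcore
end
end

section
/- Any algebraic curvature tensor R on ℝⁿ (n ≥ 4) that is strictly 1/4-pinched, in the sense that there exist K_min, K_max with 0 < K_max < 4K_min and K_min(|X|²|Y|² − ⟨X,Y⟩²) ≤ R(X,Y,X,Y) ≤ K_max(|X|²|Y|² − ⟨X,Y⟩²) for all X, Y, has positive isotropic curvature, assuming Berger's inequality |R(e₁,e₂,e₃,e₄)| ≤ (2/3)(K_max − K_min) for orthonormal four-frames. -/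
noncomputable section
open scoped BigOperators

theorem quarter_pinched_implies_pic {n : ℕ} (hn : 4 ≤ n)
    (R : MultilinearMap ℝ (fun _ : Fin 4 => (Fin n → ℝ)) ℝ)
    (hanti : ∀ X Y Z W, R ![X, Y, Z, W] = - R ![Y, X, Z, W])
    (hpair : ∀ X Y Z W, R ![X, Y, Z, W] = R ![Z, W, X, Y])
    (hbianchi : ∀ X Y Z W,
      R ![X, Y, Z, W] + R ![Y, Z, X, W] + R ![Z, X, Y, W] = 0)
    (Kmin Kmax : ℝ) (hK0 : 0 < Kmax) (hK4 : Kmax < 4 * Kmin)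
    (hpinch : ∀ X Y : Fin n → ℝ,
      Kmin * (dotp X X * dotp Y Y - (dotp X Y) ^ 2) ≤ R ![X, Y, X, Y] ∧
      R ![X, Y, X, Y] ≤ Kmax * (dotp X X * dotp Y Y - (dotp X Y) ^ 2))
    (hberger : ∀ e₁ e₂ e₃ e₄ : Fin n → ℝ, ON4 e₁ e₂ e₃ e₄ →
      |R ![e₁, e₂, e₃, e₄]| ≤ (2 / 3) * (Kmax - Kmin)) :
    ∀ e₁ e₂ e₃ e₄ : Fin n → ℝ, ON4 e₁ e₂ e₃ e₄ →
      0 < R ![e₁, e₃, e₁, e₃] + R ![e₁, e₄, e₁, e₄] + R ![e₂, e₃, e₂, e₃]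
          + R ![e₂, e₄, e₂, e₄] - 2 * R ![e₁, e₂, e₃, e₄] := by
  intro e₁ e₂ e₃ e₄ hON
  obtain ⟨h1, h2, h3, h4, h12, h13, h14, h23, h24, h34⟩ := hON
  have h13' := (hpinch e₁ e₃).1
  have h14' := (hpinch e₁ e₄).1
  have h23' := (hpinch e₂ e₃).1
  have h24' := (hpinch e₂ e₄).1
  rw [h1, h3, h13] at h13'
  rw [h1, h4, h14] at h14'
  rw [h2, h3, h23] at h23'
  rw [h2, h4, h24] at h24'
  have hb := hberger e₁ e₂ e₃ e₄ ⟨h1, h2, h3, h4, h12, h13, h14, h23, h24, h34⟩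
  have hb' := abs_le.mp hb
  nlinarith [h13', h14', h23', h24', hb'.1, hb'.2]
end
end
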